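/- arXiv:2405.11664 — 7 statements merged into one kernel-verified Lean document; each statement's English description precedes it below -/
import Mathlib

section
/- Let A, B be bounded operators on a Hilbert space H with ‖A‖ ≤ 1, B selfadjoint with -1 ≤ B ≤ 1, and ker(1+B) = {0}. If μ is a complex number with |μ| = 1 and φ ∈ H satisfies A B φ = μ φ, then A φ = μ φ and B φ = φ. -/
open ContinuousLinearMap
open scoped InnerProductSpace

lemma aux_pos_apply_eq_zero {H : Type*} [NormedAddCommGroup H] [InnerProductSpace ℂ H]
    [CompleteSpace H] (T : H →L[ℂ] H) (hT : T.IsPositive) (x : H)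
    (hx : Complex.re ⟪T x, x⟫_ℂ = 0) : T x = 0 := by
  have hsym : (T : H →ₗ[ℂ] H).IsSymmetric :=
    (ContinuousLinearMap.isSelfAdjoint_iff_isSymmetric).mp hT.isSelfAdjoint
  set a : ℝ := ‖T x‖ ^ 2 with ha
  set c : ℝ := Complex.re ⟪T (T x), T x⟫_ℂ with hc
  have hc0 : 0 ≤ c := hT.re_inner_nonneg_left (T x)
  have ha0 : 0 ≤ a := sq_nonneg _
  have hTx : ⟪T (T x), x⟫_ℂ = ⟪T x, T x⟫_ℂ := hsym (T x) x
  have hre : Complex.re ⟪T x, T x⟫_ℂ = a := by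
    rw [ha, @norm_sq_eq_re_inner ℂ]; rfl
  have key : ∀ t : ℝ, 0 ≤ 2 * t * a + t ^ 2 * c := by
    intro t
    have h0 : 0 ≤ Complex.re ⟪T (x + (t : ℂ) • T x), x + (t : ℂ) • T x⟫_ℂ :=
      hT.re_inner_nonneg_left _
    simp only [map_add, map_smul, inner_add_left, inner_add_right, inner_smul_left,
      inner_smul_right, Complex.conj_ofReal, hTx] at h0
    simp only [Complex.add_re, Complex.re_ofReal_mul, Complex.mul_re, Complex.ofReal_re,
      Complex.ofReal_im, hx, hre] at h0
    nlinarith [h0]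
  have : a = 0 := by
    have hc1 : (0:ℝ) < c + 1 := by linarith
    have h1 := key (-(a / (c + 1)))
    have h3 : 2 * -(a / (c + 1)) * a + (-(a / (c + 1))) ^ 2 * c
        = -(a ^ 2 * (c + 2)) / (c + 1) ^ 2 := by
      field_simp
      ring
    rw [h3] at h1
    have h4 : (0:ℝ) ≤ -(a ^ 2 * (c + 2)) := by
      have h5 := mul_nonneg h1 (le_of_lt (show (0:ℝ) < (c+1)^2 by positivity))
      rwa [div_mul_cancel₀ _ (show ((c+1)^2:ℝ) ≠ 0 by positivity)] at h5
    nlinarith [sq_nonneg a]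
  have : ‖T x‖ = 0 := by
    have := pow_eq_zero_iff (n := 2) (by norm_num) |>.mp this
    exact this
  simpa using this

theorem stmt0 {H : Type*} [NormedAddCommGroup H] [InnerProductSpace ℂ H] [CompleteSpace H]
    (A B : H →L[ℂ] H) (hA : ‖A‖ ≤ 1) (hB : IsSelfAdjoint B)
    (hB1 : (1 + B).IsPositive) (hB2 : (1 - B).IsPositive)
    (hker : LinearMap.ker ((1 + B : H →L[ℂ] H) : H →ₗ[ℂ] H) = ⊥)
    (μ : ℂ) (hμ : ‖μ‖ = 1) (φ : H) (h : A (B φ) = μ • φ) :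
    A φ = μ • φ ∧ B φ = φ := by
  have hsym : (B : H →ₗ[ℂ] H).IsSymmetric :=
    (ContinuousLinearMap.isSelfAdjoint_iff_isSymmetric).mp hB
  -- ‖φ‖ ≤ ‖B φ‖
  have hnorm : ‖φ‖ ≤ ‖B φ‖ := by
    have h1 : ‖A (B φ)‖ ≤ ‖A‖ * ‖B φ‖ := A.le_opNorm (B φ)
    rw [h, norm_smul, hμ, one_mul] at h1
    calc ‖φ‖ ≤ ‖A‖ * ‖B φ‖ := h1
      _ ≤ 1 * ‖B φ‖ := by gcongr
      _ = ‖B φ‖ := one_mul _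
  -- both applications equal y = φ - B (B φ)
  have e1 : (1 + B) ((1 - B) φ) = φ - B (B φ) := by
    simp only [add_apply, sub_apply, one_apply_eq_self, map_sub]
    abel
  have e2 : (1 - B) ((1 + B) φ) = φ - B (B φ) := by
    simp only [add_apply, sub_apply, one_apply_eq_self, map_add]
    abel
  set r : ℝ := Complex.re ⟪(1 + B) ((1 - B) φ), (1 - B) φ⟫_ℂ with hr
  set s : ℝ := Complex.re ⟪(1 - B) ((1 + B) φ), (1 + B) φ⟫_ℂ with hs
  have hr0 : 0 ≤ r := hB1.re_inner_nonneg_left _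
  have hs0 : 0 ≤ s := hB2.re_inner_nonneg_left _
  have hBB : ⟪B (B φ), φ⟫_ℂ = ⟪B φ, B φ⟫_ℂ := hsym (B φ) φ
  have hsum : r + s = 2 * (‖φ‖ ^ 2 - ‖B φ‖ ^ 2) := by
    rw [hr, hs, e1, e2]
    have : (1 - B) φ = φ - B φ := by simp [sub_apply]
    rw [this]
    have : (1 + B) φ = φ + B φ := by simp [add_apply]
    rw [this]
    rw [inner_sub_right, inner_add_right]
    simp only [inner_sub_left, hBB]
    have h1 : Complex.re ⟪φ, φ⟫_ℂ = ‖φ‖ ^ 2 := by rw [@norm_sq_eq_re_inner ℂ]; rfl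
    have h2 : Complex.re ⟪B φ, B φ⟫_ℂ = ‖B φ‖ ^ 2 := by rw [@norm_sq_eq_re_inner ℂ]; rfl
    have h3 : Complex.re ⟪φ, B φ⟫_ℂ = Complex.re ⟪B φ, φ⟫_ℂ := inner_re_symm (𝕜 := ℂ) φ (B φ)
    simp only [Complex.sub_re, Complex.add_re, h1, h2]
    rw [h3]; ring
  have hrz : r = 0 := by nlinarith [hnorm, norm_nonneg φ, norm_nonneg (B φ)]
  have hz : (1 + B) ((1 - B) φ) = 0 := aux_pos_apply_eq_zero _ hB1 _ hrz
  have hker' : (1 - B) φ = 0 := by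
    have : (1 - B) φ ∈ LinearMap.ker ((1 + B : H →L[ℂ] H) : H →ₗ[ℂ] H) := by
      rw [LinearMap.mem_ker]; exact hz
    rw [hker] at this; simpa using this
  have hBφ : B φ = φ := by
    have h' : φ - B φ = 0 := by simpa [sub_apply] using hker'
    exact (sub_eq_zero.mp h').symm
  rw [hBφ] at h
  exact ⟨h, hBφ⟩
end

section
/- Let A, B be bounded operators on a Hilbert space H with ‖A‖ ≤ 1, B selfadjoint with -1 ≤ B ≤ 1, μ ∈ ℂ with |μ| = 1, and φ ∈ H with A B φ = μ φ and ‖φ‖ = 1. Then ⟨Bφ, (1 - A*A) Bφ⟩ + ⟨φ, (1 - B²) φ⟩ = 0 and consequently √(1 - B²) φ = 0. -/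
open ContinuousLinearMap
open scoped InnerProductSpace

theorem stmt1 {H : Type*} [NormedAddCommGroup H] [InnerProductSpace ℂ H] [CompleteSpace H]
    (A B : H →L[ℂ] H) (hA : ‖A‖ ≤ 1) (hB : IsSelfAdjoint B)
    (hB1 : (1 + B).IsPositive) (hB2 : (1 - B).IsPositive)
    (μ : ℂ) (hμ : ‖μ‖ = 1) (φ : H) (hφ : ‖φ‖ = 1) (h : A (B φ) = μ • φ) :
    ⟪B φ, ((1 : H →L[ℂ] H) - adjoint A ∘L A) (B φ)⟫_ℂ
      + ⟪φ, ((1 : H →L[ℂ] H) - B ∘L B) φ⟫_ℂ = 0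
    ∧ ∀ S : H →L[ℂ] H, S.IsPositive → S ∘L S = 1 - B ∘L B → S φ = 0 := by
  have h1 : ‖A (B φ)‖ = 1 := by rw [h, norm_smul, hμ, hφ]; ring
  have hBφ : (1 : ℝ) ≤ ‖B φ‖ := by
    have h2 : ‖A (B φ)‖ ≤ ‖A‖ * ‖B φ‖ := A.le_opNorm _
    nlinarith [norm_nonneg (B φ), norm_nonneg A]
  have hBadj : adjoint B = B := hB
  have key1 : ⟪B φ, ((1 : H →L[ℂ] H) - adjoint A ∘L A) (B φ)⟫_ℂ
      = ((‖B φ‖ : ℂ)^2 - 1) := by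
    simp only [sub_apply, one_apply, comp_apply, inner_sub_right]
    rw [ContinuousLinearMap.one_apply, adjoint_inner_right, inner_self_eq_norm_sq_to_K, inner_self_eq_norm_sq_to_K, h1]
    push_cast
    norm_num
  have key2 : ⟪φ, ((1 : H →L[ℂ] H) - B ∘L B) φ⟫_ℂ = (1 - (‖B φ‖ : ℂ)^2) := by
    simp only [sub_apply, one_apply, comp_apply, inner_sub_right]
    rw [ContinuousLinearMap.one_apply, ← adjoint_inner_left, hBadj, inner_self_eq_norm_sq_to_K, inner_self_eq_norm_sq_to_K, hφ]
    push_cast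
    norm_num
  constructor
  · rw [key1, key2]; ring
  · intro S hS hSS
    have hSadj : adjoint S = S := hS.isSelfAdjoint.adjoint_eq
    have hre : ‖S φ‖ ^ 2 = 1 - ‖B φ‖ ^ 2 := by
      have : ⟪S φ, S φ⟫_ℂ = ⟪φ, ((1 : H →L[ℂ] H) - B ∘L B) φ⟫_ℂ := by
        rw [← hSadj, adjoint_inner_left, hSadj, ← comp_apply, hSS]
      rw [key2, inner_self_eq_norm_sq_to_K] at this
      exact_mod_cast congrArg Complex.re this
    have : ‖S φ‖ ^ 2 ≤ 0 := by nlinarith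
    have h0 : ‖S φ‖ = 0 := by nlinarith [norm_nonneg (S φ)]
    exact norm_eq_zero.mp h0
end

section
/- Let U be a unitary operator and P, Q selfadjoint operators on a Hilbert space H with 0 ≤ P ≤ 1 and 0 ≤ Q ≤ 1. Set V = P U Q. If μ ∈ ℂ with |μ| = 1 and ψ ∈ H \ {0} satisfies V ψ = μ ψ, then U ψ = μ ψ, P ψ = ψ, and Q ψ = ψ. -/
open ContinuousLinearMap
open scoped InnerProductSpace

section Aux

variable {H : Type*} [NormedAddCommGroup H] [InnerProductSpace ℂ H] [CompleteSpace H]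

lemma aux_pos_sub_sq {A : H →L[ℂ] H} (hA : A.IsPositive) (h1 : (1 - A).IsPositive) :
    (A - A * A).IsPositive := by
  have hadjA : ContinuousLinearMap.adjoint A = A := hA.isSelfAdjoint.adjoint_eq
  have hadj1 : ContinuousLinearMap.adjoint (1 - A) = 1 - A := h1.isSelfAdjoint.adjoint_eq
  have p1 := h1.adjoint_conj A
  have p2 := hA.adjoint_conj (1 - A)
  have := p1.add p2
  convert this using 1
  rw [hadjA, hadj1]
  ext x
  simp only [ContinuousLinearMap.add_apply, ContinuousLinearMap.coe_comp',
    Function.comp_apply, ContinuousLinearMap.sub_apply, ContinuousLinearMap.mul_apply,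
    ContinuousLinearMap.one_apply, map_sub]
  abel

lemma aux_key {A : H →L[ℂ] H} (hA : A.IsPositive) (h1 : (1 - A).IsPositive) (x : H) :
    ‖A x‖ ^ 2 ≤ RCLike.re ⟪A x, x⟫_ℂ := by
  have hadjA : ContinuousLinearMap.adjoint A = A := hA.isSelfAdjoint.adjoint_eq
  have hpos := (aux_pos_sub_sq hA h1).inner_nonneg_left x
  have h2 : ⟪A (A x), x⟫_ℂ = ⟪A x, A x⟫_ℂ := by
    exact (isSelfAdjoint_iff_isSymmetric.mp hA.isSelfAdjoint) (A x) x
  have h3 : RCLike.re ⟪A x, A x⟫_ℂ = ‖A x‖ ^ 2 := inner_self_eq_norm_sq _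
  simp only [ContinuousLinearMap.sub_apply, ContinuousLinearMap.mul_apply,
    inner_sub_left, map_sub] at hpos
  rw [h2] at hpos
  rw [← h3]
  have hpos' := (Complex.nonneg_iff.mp hpos).1
  rw [Complex.sub_re] at hpos'
  simp only [RCLike.re_to_complex]
  linarith

lemma aux_norm_le {A : H →L[ℂ] H} (hA : A.IsPositive) (h1 : (1 - A).IsPositive) (x : H) :
    ‖A x‖ ≤ ‖x‖ := by
  have hk := aux_key hA h1 x
  have hcs : RCLike.re ⟪A x, x⟫_ℂ ≤ ‖A x‖ * ‖x‖ := by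
    calc RCLike.re ⟪A x, x⟫_ℂ ≤ ‖⟪A x, x⟫_ℂ‖ := RCLike.re_le_norm _
      _ ≤ ‖A x‖ * ‖x‖ := norm_inner_le_norm _ _
  nlinarith [norm_nonneg (A x), norm_nonneg x]

lemma aux_fix {A : H →L[ℂ] H} (hA : A.IsPositive) (h1 : (1 - A).IsPositive) (x : H)
    (hx : ‖A x‖ = ‖x‖) : A x = x := by
  have hk := aux_key hA h1 x
  rw [hx] at hk
  have hsub : ‖x - A x‖ ^ 2 = ‖x‖ ^ 2 - 2 * RCLike.re ⟪x, A x⟫_ℂ + ‖A x‖ ^ 2 :=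
    norm_sub_sq x (A x)
  rw [inner_re_symm, hx] at hsub
  have : ‖x - A x‖ ^ 2 ≤ 0 := by linarith
  have h0 : x - A x = 0 := by
    have := norm_nonneg (x - A x)
    have hn : ‖x - A x‖ = 0 := by nlinarith
    exact norm_eq_zero.mp hn
  linear_combination (norm := module) -h0

end Aux

theorem stmt2 {H : Type*} [NormedAddCommGroup H] [InnerProductSpace ℂ H] [CompleteSpace H]
    (U P Q : H →L[ℂ] H) (hU : U ∈ unitary (H →L[ℂ] H))
    (hP : IsSelfAdjoint P) (hQ : IsSelfAdjoint Q)
    (hP0 : P.IsPositive) (hP1 : (1 - P).IsPositive)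
    (hQ0 : Q.IsPositive) (hQ1 : (1 - Q).IsPositive)
    (μ : ℂ) (hμ : ‖μ‖ = 1) (ψ : H) (hψ : ψ ≠ 0)
    (h : (P * U * Q) ψ = μ • ψ) :
    U ψ = μ • ψ ∧ P ψ = ψ ∧ Q ψ = ψ := by
  have hUiso : ∀ y : H, ‖U y‖ = ‖y‖ := by
    intro y
    have hstar : star U * U = 1 := (Unitary.mem_iff.mp hU).1
    have h1 : ⟪U y, U y⟫_ℂ = ⟪y, y⟫_ℂ := by
      rw [← ContinuousLinearMap.adjoint_inner_right, ← ContinuousLinearMap.star_eq_adjoint,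
        ← ContinuousLinearMap.mul_apply, hstar, ContinuousLinearMap.one_apply]
    have := congrArg RCLike.re h1
    rw [inner_self_eq_norm_sq, inner_self_eq_norm_sq] at this
    nlinarith [norm_nonneg (U y), norm_nonneg y]
  have happ : P (U (Q ψ)) = μ • ψ := h
  have hnormμ : ‖μ • ψ‖ = ‖ψ‖ := by rw [norm_smul, hμ, one_mul]
  have hchain1 : ‖ψ‖ ≤ ‖Q ψ‖ := by
    calc ‖ψ‖ = ‖P (U (Q ψ))‖ := by rw [happ, hnormμ]
      _ ≤ ‖U (Q ψ)‖ := aux_norm_le hP0 hP1 _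
      _ = ‖Q ψ‖ := hUiso _
  have hQnorm : ‖Q ψ‖ = ‖ψ‖ := le_antisymm (aux_norm_le hQ0 hQ1 ψ) hchain1
  have hQψ : Q ψ = ψ := aux_fix hQ0 hQ1 ψ hQnorm
  rw [hQψ] at happ
  have hPU : ‖P (U ψ)‖ = ‖U ψ‖ := by
    rw [happ, hnormμ, hUiso]
  have hPUψ : P (U ψ) = U ψ := aux_fix hP0 hP1 _ hPU
  have hUψ : U ψ = μ • ψ := by rw [← hPUψ, happ]
  refine ⟨hUψ, ?_, hQψ⟩
  have hμ0 : μ ≠ 0 := by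
    intro h0; rw [h0] at hμ; simp at hμ
  have : μ • P ψ = μ • ψ := by
    rw [← map_smul, ← hUψ, hPUψ, hUψ]
  exact smul_right_injective H hμ0 this
end

section
/- Let V be a contraction on a Hilbert space H (‖V‖ ≤ 1). For every z in the open unit disk, the operator 1 - z V* is boundedly invertible and satisfies the identity 2 Re((1 - zV*)⁻¹) - 1 = (1 - zV*)⁻¹ (1 - |z|² V* V^{**}) ((1 - zV*)⁻¹)*, where Re(T) := (T + T*)/2. In particular 2 Re((1 - zV*)⁻¹) - 1 ≥ 0. -/
open ContinuousLinearMap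
open scoped InnerProductSpace

set_option maxHeartbeats 1000000 in
theorem stmt3 {H : Type*} [NormedAddCommGroup H] [InnerProductSpace ℂ H] [CompleteSpace H]
    (V : H →L[ℂ] H) (hV : ‖V‖ ≤ 1) (z : ℂ) (hz : ‖z‖ < 1) :
    IsUnit (1 - z • adjoint V) ∧
    (∀ G : H →L[ℂ] H, G = Ring.inverse (1 - z • adjoint V) →
      (G + adjoint G - 1
          = G * (1 - ((‖z‖ ^ 2 : ℝ) : ℂ) • (adjoint V * V)) * adjoint G)
      ∧ (G + adjoint G - 1).IsPositive) := by
  set A : H →L[ℂ] H := 1 - z • adjoint V with hAdef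
  have hnorm : ‖z • adjoint V‖ < 1 := by
    rw [norm_smul, adjoint.norm_map]
    calc ‖z‖ * ‖V‖ ≤ ‖z‖ * 1 := by
          exact mul_le_mul_of_nonneg_left hV (norm_nonneg z)
      _ = ‖z‖ := mul_one _
      _ < 1 := hz
  have hA : IsUnit A := isUnit_one_sub_of_norm_lt_one hnorm
  refine ⟨hA, fun G hG => ?_⟩
  have hGA : G * A = 1 := by rw [hG]; exact Ring.inverse_mul_cancel A hA
  have hAG : A * G = 1 := by rw [hG]; exact Ring.mul_inverse_cancel A hA
  have hadjA : adjoint A = 1 - (starRingEnd ℂ) z • V := by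
    rw [hAdef, ← star_eq_adjoint, star_sub, star_one, star_smul, star_eq_adjoint,
      adjoint_adjoint]
    rfl
  have hAGadj : adjoint A * adjoint G = 1 := by
    rw [← star_eq_adjoint, ← star_eq_adjoint, ← star_mul, hGA, star_one]
  have hGAadj : adjoint G * adjoint A = 1 := by
    rw [← star_eq_adjoint, ← star_eq_adjoint, ← star_mul, hAG, star_one]
  have hzz : ((‖z‖ ^ 2 : ℝ) : ℂ) = z * (starRingEnd ℂ) z := by
    rw [Complex.mul_conj]
    norm_cast
    rw [Complex.sq_norm]
  have hB : (1 - ((‖z‖ ^ 2 : ℝ) : ℂ) • (adjoint V * V)) = adjoint A + A - A * adjoint A := by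
    rw [hzz, hadjA, hAdef]
    simp only [mul_sub, sub_mul, mul_one, one_mul, smul_mul_assoc, mul_smul_comm, smul_smul]
    abel_nf
    module
  have key : G + adjoint G - 1
      = G * (1 - ((‖z‖ ^ 2 : ℝ) : ℂ) • (adjoint V * V)) * adjoint G := by
    rw [hB]
    have e1 : G * (adjoint A + A - A * adjoint A) * adjoint G
        = G * adjoint A * adjoint G + G * A * adjoint G - G * A * (adjoint A * adjoint G) := by
      noncomm_ring
    rw [e1, hGA, hAGadj, one_mul, mul_one]
    rw [show G * adjoint A * adjoint G = G * (adjoint A * adjoint G) from mul_assoc _ _ _,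
      hAGadj, mul_one]
  refine ⟨key, ?_⟩
  rw [key]
  have hBpos : (1 - ((‖z‖ ^ 2 : ℝ) : ℂ) • (adjoint V * V)).IsPositive := by
    constructor
    · rw [← isSelfAdjoint_iff_isSymmetric, IsSelfAdjoint, star_sub, star_one, star_smul, star_mul, star_eq_adjoint,
        star_eq_adjoint, adjoint_adjoint, RCLike.star_def, Complex.conj_ofReal]
    · intro x
      have hVx : ‖V x‖ ≤ ‖x‖ := by
        calc ‖V x‖ ≤ ‖V‖ * ‖x‖ := V.le_opNorm x
          _ ≤ 1 * ‖x‖ := by exact mul_le_mul_of_nonneg_right hV (norm_nonneg x)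
          _ = ‖x‖ := one_mul _
      have : ((1 - ((‖z‖ ^ 2 : ℝ) : ℂ) • (adjoint V * V)) : H →L[ℂ] H).reApplyInnerSelf x
          = ‖x‖ ^ 2 - ‖z‖ ^ 2 * ‖V x‖ ^ 2 := by
        rw [reApplyInnerSelf]
        simp only [sub_apply, ContinuousLinearMap.one_apply, smul_apply, ContinuousLinearMap.mul_apply, inner_sub_left,
          inner_smul_left]
        rw [adjoint_inner_left]
        rw [← inner_self_eq_norm_sq (𝕜 := ℂ), ← inner_self_eq_norm_sq (𝕜 := ℂ)]
        simp [Complex.conj_ofReal]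
        left
        rw [← inner_self_eq_norm_sq (𝕜 := ℂ)]
        rw [inner_self_eq_norm_sq_to_K]; rfl
      rw [this]
      have h1 : ‖z‖ ^ 2 * ‖V x‖ ^ 2 ≤ 1 * ‖x‖ ^ 2 := by
        apply mul_le_mul
        · nlinarith [norm_nonneg z]
        · nlinarith [norm_nonneg (V x), norm_nonneg x]
        · positivity
        · norm_num
      nlinarith
  have := hBpos.conj_adjoint G
  rwa [← mul_def, ← mul_def] at this
end

section
/- Let B be a bounded selfadjoint operator and E an orthogonal projection on a Hilbert space H, with E⊥ := 1 - E. If there exists c > 0 with E B E ≥ c E, then for every p > 0 with c - p‖B‖ > 0, one has B ≥ (c - p‖B‖) E - ‖B‖(1 + p⁻¹) E⊥. Conversely, if B ≥ a E - b E⊥ for some a > 0, b > 0, then E B E ≥ a E. -/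
open ContinuousLinearMap

section aux

variable {H : Type*} [NormedAddCommGroup H] [InnerProductSpace ℂ H] [CompleteSpace H]

lemma E_inner_aux (E : H →L[ℂ] H) (hEsa : IsSelfAdjoint E) (y x : H) :
    (inner ℂ (E y) x : ℂ) = inner ℂ y (E x) := by
  nth_rewrite 1 [← hEsa.adjoint_eq]
  exact ContinuousLinearMap.adjoint_inner_left E x y

lemma proj_inner_re_aux (E : H →L[ℂ] H) (hE : IsIdempotentElem E)
    (hEsa : IsSelfAdjoint E) (x : H) :
    (inner ℂ (E x) x : ℂ).re = ‖E x‖ ^ 2 := by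
  have h1 : (inner ℂ (E x) x : ℂ) = inner ℂ (E x) (E x) := by
    nth_rewrite 1 [show E x = E (E x) by rw [← mul_apply_eq_comp, hE.eq]]
    exact E_inner_aux E hEsa (E x) x
  rw [h1]
  have := inner_self_eq_norm_sq (𝕜 := ℂ) (E x)
  simpa using this

end aux

theorem stmt5 {H : Type*} [NormedAddCommGroup H] [InnerProductSpace ℂ H] [CompleteSpace H]
    (B E : H →L[ℂ] H) (hB : IsSelfAdjoint B)
    (hE : IsIdempotentElem E) (hEsa : IsSelfAdjoint E) :
    (∀ c : ℝ, 0 < c → (E * B * E - (c : ℂ) • E).IsPositive →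
      ∀ p : ℝ, 0 < p → 0 < c - p * ‖B‖ →
        (B - (((c - p * ‖B‖ : ℝ) : ℂ) • E
            - ((‖B‖ * (1 + p⁻¹) : ℝ) : ℂ) • (1 - E))).IsPositive) ∧
    (∀ a b : ℝ, 0 < a → 0 < b →
      (B - ((a : ℂ) • E - (b : ℂ) • (1 - E))).IsPositive →
      (E * B * E - (a : ℂ) • E).IsPositive) := by
  have hE' : IsIdempotentElem (1 - E) := hE.one_sub
  have hE'sa : IsSelfAdjoint (1 - E) := by
    simp only [IsSelfAdjoint, star_sub, star_one, hEsa.star_eq]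
  constructor
  · intro c hc hpos p hp hcp
    constructor
    · rw [← isSelfAdjoint_iff_isSymmetric]; simp only [IsSelfAdjoint, star_sub, star_smul, star_one,
        hEsa.star_eq, hB.star_eq, Complex.star_def, Complex.conj_ofReal]
    · intro x
      rw [ContinuousLinearMap.reApplyInnerSelf_apply]
      -- notation
      have hxx : (inner ℂ x x : ℂ).re = ‖x‖ ^ 2 := by
        have := inner_self_eq_norm_sq (𝕜 := ℂ) x; simpa using this
      have hEu : (inner ℂ (E x) x : ℂ).re = ‖E x‖ ^ 2 := proj_inner_re_aux E hE hEsa x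
      have hEv : (inner ℂ ((1 - E) x) x : ℂ).re = ‖(1 - E) x‖ ^ 2 :=
        proj_inner_re_aux _ hE' hE'sa x
      have hvu : ‖(1 - E) x‖ ^ 2 = ‖x‖ ^ 2 - ‖E x‖ ^ 2 := by
        have h := hEv
        rw [show (1 - E) x = x - E x by simp [sub_apply], inner_sub_left,
          Complex.sub_re, hxx, hEu] at h
        rw [show (1 - E) x = x - E x by simp [sub_apply]]
        linarith
      -- hypothesis: re ⟪B (E x), E x⟫ ≥ c ‖E x‖²
      have h1 : c * ‖E x‖ ^ 2 ≤ (inner ℂ (B (E x)) (E x) : ℂ).re := by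
        have hthis := hpos.2 x
        rw [ContinuousLinearMap.reApplyInnerSelf_apply] at hthis
        simp only [sub_apply, mul_apply_eq_comp, smul_apply, inner_sub_left, inner_smul_left,
          Complex.star_def, Complex.conj_ofReal, RCLike.re_to_complex, Complex.sub_re,
          Complex.re_ofReal_mul] at hthis
        rw [E_inner_aux E hEsa (B (E x)) x, hEu] at hthis
        have heq : (inner ℂ (B (E x)) (E x) : ℂ) = inner ℂ (E (B (E x))) x := by
          rw [E_inner_aux E hEsa (B (E x)) x]
        nlinarith [hthis]
      -- cross term bound
      have h2 : -(‖B‖ * ‖E x‖ * ‖(1 - E) x‖) ≤ (inner ℂ (B (E x)) ((1 - E) x) : ℂ).re := by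
        have hcs : ‖(inner ℂ (B (E x)) ((1 - E) x) : ℂ)‖ ≤ ‖B (E x)‖ * ‖(1 - E) x‖ :=
          norm_inner_le_norm _ _
        have hbd : ‖B (E x)‖ ≤ ‖B‖ * ‖E x‖ := B.le_opNorm (E x)
        have hre : |(inner ℂ (B (E x)) ((1 - E) x) : ℂ).re| ≤
            ‖(inner ℂ (B (E x)) ((1 - E) x) : ℂ)‖ := Complex.abs_re_le_norm _
        have h := neg_abs_le ((inner ℂ (B (E x)) ((1 - E) x) : ℂ).re)
        nlinarith [norm_nonneg ((1 - E) x), norm_nonneg (E x), norm_nonneg (B (E x))]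
      -- diagonal bound
      have h3 : -(‖B‖ * ‖(1 - E) x‖ ^ 2) ≤ (inner ℂ (B ((1 - E) x)) ((1 - E) x) : ℂ).re := by
        have hcs : ‖(inner ℂ (B ((1 - E) x)) ((1 - E) x) : ℂ)‖ ≤ ‖B ((1 - E) x)‖ * ‖(1 - E) x‖ :=
          norm_inner_le_norm _ _
        have hbd : ‖B ((1 - E) x)‖ ≤ ‖B‖ * ‖(1 - E) x‖ := B.le_opNorm _
        have hre : |(inner ℂ (B ((1 - E) x)) ((1 - E) x) : ℂ).re| ≤
            ‖(inner ℂ (B ((1 - E) x)) ((1 - E) x) : ℂ)‖ := Complex.abs_re_le_norm _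
        have h := neg_abs_le ((inner ℂ (B ((1 - E) x)) ((1 - E) x) : ℂ).re)
        nlinarith [norm_nonneg ((1 - E) x), norm_nonneg (B ((1 - E) x))]
      -- symmetry of the cross term
      have hsym : (inner ℂ (B ((1 - E) x)) (E x) : ℂ).re =
          (inner ℂ (B (E x)) ((1 - E) x) : ℂ).re := by
        have h : (inner ℂ (B ((1 - E) x)) (E x) : ℂ) = inner ℂ ((1 - E) x) (B (E x)) := by
          nth_rewrite 1 [← hB.adjoint_eq]
          exact ContinuousLinearMap.adjoint_inner_left B (E x) ((1 - E) x)
        rw [h, ← inner_conj_symm, Complex.conj_re]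
      -- expansion
      have hexp : (inner ℂ (B x) x : ℂ).re =
          (inner ℂ (B (E x)) (E x) : ℂ).re + 2 * (inner ℂ (B (E x)) ((1 - E) x) : ℂ).re +
            (inner ℂ (B ((1 - E) x)) ((1 - E) x) : ℂ).re := by
        have hx : x = E x + (1 - E) x := by simp [sub_apply]
        have hsplit : (inner ℂ (B x) x : ℂ) =
            inner ℂ (B (E x)) (E x) + inner ℂ (B (E x)) ((1 - E) x) +
              (inner ℂ (B ((1 - E) x)) (E x) + inner ℂ (B ((1 - E) x)) ((1 - E) x)) := by
          nth_rewrite 1 [hx]; nth_rewrite 3 [hx]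
          rw [map_add, inner_add_left, inner_add_right, inner_add_right]
        rw [hsplit]
        simp only [Complex.add_re, hsym]
        ring
      -- AM-GM
      have hamgm : 2 * ‖E x‖ * ‖(1 - E) x‖ ≤ p * ‖E x‖ ^ 2 + p⁻¹ * ‖(1 - E) x‖ ^ 2 := by
        have hpi : p * p⁻¹ = 1 := mul_inv_cancel₀ hp.ne'
        nlinarith [mul_nonneg (inv_pos.2 hp).le (sq_nonneg (p * ‖E x‖ - ‖(1 - E) x‖)), hp]
      have hBnn : (0:ℝ) ≤ ‖B‖ := norm_nonneg B
      simp only [sub_apply, smul_apply, one_apply_eq_self, inner_sub_left, inner_smul_left,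
        Complex.star_def, Complex.conj_ofReal, RCLike.re_to_complex, Complex.sub_re,
        Complex.re_ofReal_mul]
      rw [hxx, hEu, hexp, ← hvu]
      nlinarith [h1, h2, h3, mul_nonneg hBnn (sub_nonneg.2 hamgm)]
  · intro a b ha hb hpos
    constructor
    · rw [← isSelfAdjoint_iff_isSymmetric]; simp only [IsSelfAdjoint, star_sub, star_smul, star_mul,
        hEsa.star_eq, hB.star_eq, Complex.star_def, Complex.conj_ofReal, mul_assoc]
    · intro x
      rw [ContinuousLinearMap.reApplyInnerSelf_apply]
      have hEEx : E (E x) = E x := by rw [← mul_apply_eq_comp, hE.eq]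
      have h1Ex : (1 - E) (E x) = 0 := by simp [sub_apply, hEEx]
      have key := hpos.2 (E x)
      rw [ContinuousLinearMap.reApplyInnerSelf_apply] at key
      simp only [sub_apply, smul_apply, h1Ex, hEEx, smul_zero, sub_zero,
        inner_sub_left, inner_smul_left, Complex.star_def, Complex.conj_ofReal,
        RCLike.re_to_complex, Complex.sub_re, Complex.re_ofReal_mul] at key
      simp only [sub_apply, mul_apply_eq_comp, smul_apply, inner_sub_left, inner_smul_left,
        Complex.star_def, Complex.conj_ofReal, RCLike.re_to_complex, Complex.sub_re,
        Complex.re_ofReal_mul]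
      rw [E_inner_aux E hEsa (B (E x)) x]
      have hre : (inner ℂ (E x) x : ℂ).re = (inner ℂ (E x) (E x) : ℂ).re := by
        nth_rewrite 1 [show E x = E (E x) from hEEx.symm]
        rw [E_inner_aux E hEsa (E x) x]
      rw [hre]
      exact key
end

section
/- Let U be a unitary operator and P an orthogonal projection on a Hilbert space H, with P⊥ := 1 - P. Set R := U P U* P. Then 2 Re(1 - R) - (3/2)|1 - R|² = (1/2) |P⊥ - U P⊥ U* P|², where |T|² := T*T and Re(T) := (T + T*)/2. In particular 2 Re(1 - R) - (3/2)|1 - R|² ≥ 0. -/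
open ContinuousLinearMap

theorem stmt7 {H : Type*} [NormedAddCommGroup H] [InnerProductSpace ℂ H] [CompleteSpace H]
    (U P : H →L[ℂ] H) (hU : U ∈ unitary (H →L[ℂ] H))
    (hP : IsIdempotentElem P) (hPsa : IsSelfAdjoint P) :
    ∀ R S : H →L[ℂ] H,
      R = U * P * adjoint U * P →
      S = (1 - P) - U * (1 - P) * adjoint U * P →
      (((1 - R) + adjoint (1 - R)) - (3 / 2 : ℂ) • (adjoint (1 - R) * (1 - R))
          = (1 / 2 : ℂ) • (adjoint S * S))
      ∧ (((1 - R) + adjoint (1 - R))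
          - (3 / 2 : ℂ) • (adjoint (1 - R) * (1 - R))).IsPositive := by
  intro R S hR hS
  have key : (((1 - R) + adjoint (1 - R)) - (3 / 2 : ℂ) • (adjoint (1 - R) * (1 - R))
      = (1 / 2 : ℂ) • (adjoint S * S)) := by
    subst hR hS
    have h1 : star U * U = 1 := hU.1
    have h2 : U * star U = 1 := hU.2
    have e1 : ∀ X : H →L[ℂ] H, star U * (U * X) = X := fun X => by
      rw [← mul_assoc, h1, one_mul]
    have e2 : ∀ X : H →L[ℂ] H, U * (star U * X) = X := fun X => by
      rw [← mul_assoc, h2, one_mul]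
    have e3 : ∀ X : H →L[ℂ] H, P * (P * X) = P * X := fun X => by
      rw [← mul_assoc, hP.eq]
    simp only [← star_eq_adjoint, star_sub, star_mul, star_one, hPsa.star_eq, star_star]
    simp only [mul_sub, sub_mul, mul_add, add_mul, mul_one, one_mul, smul_sub, smul_add,
      mul_assoc, e1, e2, e3, h1, h2, hP.eq]
    module
  refine ⟨key, ?_⟩
  rw [key, isPositive_def']
  constructor
  · rw [IsSelfAdjoint, star_smul]
    simp [← star_eq_adjoint, star_mul, star_star, mul_assoc]
  · intro x
    rw [reApplyInnerSelf]
    simp only [smul_apply, mul_apply, inner_smul_left, adjoint_inner_left,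
      inner_self_eq_norm_sq_to_K, map_div₀, map_one, map_ofNat, ← RCLike.ofReal_pow,
      RCLike.mul_re, RCLike.ofReal_re, RCLike.ofReal_im]
    norm_num
    rw [adjoint_inner_left]
    exact inner_self_nonneg (𝕜 := ℂ)
end

section
/- Let U be a unitary operator and P, Q selfadjoint operators with 0 ≤ P ≤ 1, 0 ≤ Q ≤ 1 on a Hilbert space H, and set V := P U Q. Then for every z with |z| < 1 and every ψ ∈ H, ‖(U* - V*)(1 - zV*)⁻¹ ψ‖² ≤ 8 ⟨ψ, Re((1 - zV*)⁻¹) ψ⟩. -/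
open ContinuousLinearMap
open scoped InnerProductSpace

-- For selfadjoint 0 ≤ A ≤ 1: A - A² is positive
lemma aux_pos {H : Type*} [NormedAddCommGroup H] [InnerProductSpace ℂ H] [CompleteSpace H]
    (A : H →L[ℂ] H) (hAsa : IsSelfAdjoint A)
    (hA0 : A.IsPositive) (hA1 : (1 - A).IsPositive) :
    (A - A * A).IsPositive := by
  have h1 : ((1 - A) ∘L A ∘L adjoint (1 - A)).IsPositive := hA0.conj_adjoint (1 - A)
  have h2 : (A ∘L (1 - A) ∘L adjoint A).IsPositive := hA1.conj_adjoint A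
  have hadj : adjoint (1 - A) = 1 - A := by
    exact ((IsSelfAdjoint.one (R := H →L[ℂ] H)).sub hAsa).adjoint_eq
  have hadjA : adjoint A = A := hAsa.adjoint_eq
  rw [hadj] at h1
  rw [hadjA] at h2
  have key : A - A * A = ((1 - A) ∘L A ∘L (1 - A)) + (A ∘L (1 - A) ∘L A) := by
    ext x
    simp only [ContinuousLinearMap.coe_comp', Function.comp_apply, ContinuousLinearMap.sub_apply,
      ContinuousLinearMap.add_apply, ContinuousLinearMap.mul_apply, ContinuousLinearMap.one_apply]
    simp only [map_sub]
    abel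
  rw [key]; exact h1.add h2

-- For selfadjoint 0 ≤ A ≤ 1: ‖x - Ax‖² + ‖Ax‖² ≤ ‖x‖²
lemma aux_norm {H : Type*} [NormedAddCommGroup H] [InnerProductSpace ℂ H] [CompleteSpace H]
    (A : H →L[ℂ] H) (hAsa : IsSelfAdjoint A)
    (hA0 : A.IsPositive) (hA1 : (1 - A).IsPositive) (x : H) :
    ‖x - A x‖ ^ 2 + ‖A x‖ ^ 2 ≤ ‖x‖ ^ 2 := by
  have hpos := (aux_pos A hAsa hA0 hA1).inner_nonneg_right x
  rw [ContinuousLinearMap.sub_apply, ContinuousLinearMap.mul_apply, inner_sub_right] at hpos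
  have hAA : ⟪x, A (A x)⟫_ℂ = ⟪A x, A x⟫_ℂ := by
    rw [← adjoint_inner_left, hAsa.adjoint_eq]
  rw [hAA] at hpos
  have hsq : RCLike.re ⟪A x, A x⟫_ℂ = ‖A x‖ ^ 2 := inner_self_eq_norm_sq _
  have hexp : ‖x - A x‖ ^ 2 = ‖x‖ ^ 2 - 2 * (⟪x, A x⟫_ℂ).re + ‖A x‖ ^ 2 :=
    @norm_sub_sq ℂ _ _ _ _ x (A x)
  have : 0 ≤ RCLike.re ⟪x, A x⟫_ℂ - ‖A x‖ ^ 2 := by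
    have h0 := (Complex.le_def.mp hpos).1
    rw [Complex.zero_re, Complex.sub_re] at h0
    have hsq' : (⟪A x, A x⟫_ℂ).re = ‖A x‖ ^ 2 := hsq
    rw [hsq'] at h0
    exact h0
  have hcast : RCLike.re ⟪x, A x⟫_ℂ = (⟪x, A x⟫_ℂ).re := rfl
  rw [hcast] at this
  linarith

set_option maxHeartbeats 2000000 in
theorem stmt10 {H : Type*} [NormedAddCommGroup H] [InnerProductSpace ℂ H] [CompleteSpace H]
    (U P Q : H →L[ℂ] H) (hU : U ∈ unitary (H →L[ℂ] H))
    (hPsa : IsSelfAdjoint P) (hQsa : IsSelfAdjoint Q)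
    (hP0 : P.IsPositive) (hP1 : (1 - P).IsPositive)
    (hQ0 : Q.IsPositive) (hQ1 : (1 - Q).IsPositive)
    (z : ℂ) (hz : ‖z‖ < 1) :
    ∀ V G : H →L[ℂ] H, V = P * U * Q → G = Ring.inverse (1 - z • adjoint V) →
      ∀ ψ : H,
        ‖(adjoint U - adjoint V) (G ψ)‖ ^ 2
          ≤ 8 * (⟪ψ, ((2 : ℂ)⁻¹ • (G + adjoint G)) ψ⟫_ℂ).re := by
  intro V G hV hG ψ
  -- basic norm facts
  have hPn : ∀ x : H, ‖P x‖ ≤ ‖x‖ := by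
    intro x
    have h := aux_norm P hPsa hP0 hP1 x
    nlinarith [norm_nonneg (P x), norm_nonneg x, norm_nonneg (x - P x), sq_nonneg (‖x - P x‖)]
  have hQn : ∀ x : H, ‖Q x‖ ≤ ‖x‖ := by
    intro x
    have h := aux_norm Q hQsa hQ0 hQ1 x
    nlinarith [norm_nonneg (Q x), norm_nonneg x, norm_nonneg (x - Q x), sq_nonneg (‖x - Q x‖)]
  have hUadj : ∀ x : H, ‖adjoint U x‖ = ‖x‖ := by
    intro x
    rw [← star_eq_adjoint]
    exact (star U).norm_map_of_mem_unitary (Unitary.star_mem hU) x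
  have hUn : ∀ x : H, ‖U x‖ = ‖x‖ := fun x => U.norm_map_of_mem_unitary hU x
  -- adjoint of V
  have hVadj : ∀ x : H, adjoint V x = Q (adjoint U (P x)) := by
    intro x
    rw [hV, ← star_eq_adjoint, star_mul, star_mul, hQsa.star_eq, hPsa.star_eq, star_eq_adjoint]
    simp [ContinuousLinearMap.mul_apply]
  have hVn : ∀ x : H, ‖adjoint V x‖ ≤ ‖x‖ := by
    intro x
    rw [hVadj x]
    calc ‖Q (adjoint U (P x))‖ ≤ ‖adjoint U (P x)‖ := hQn _
      _ = ‖P x‖ := hUadj _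
      _ ≤ ‖x‖ := hPn _
  -- the inverse
  have hznorm : ‖z • adjoint V‖ < 1 := by
    have h1 : ‖adjoint V‖ ≤ 1 := (adjoint V).opNorm_le_bound zero_le_one
      (fun x => by simpa using hVn x)
    calc ‖z • adjoint V‖ = ‖z‖ * ‖adjoint V‖ := norm_smul z _
      _ ≤ ‖z‖ * 1 := by gcongr
      _ < 1 := by simpa using hz
  set u : (H →L[ℂ] H)ˣ := Units.oneSub (z • adjoint V) hznorm with hu
  have hGu : G = ↑u⁻¹ := by
    rw [hG]
    exact NormedRing.inverse_one_sub _ hznorm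
  have hψeq : ψ = G ψ - z • (adjoint V (G ψ)) := by
    have h1 : ((1 - z • adjoint V) * G) = 1 := by
      rw [hGu]
      exact u.mul_inv
    have h2 := congrArg (fun T : H →L[ℂ] H => T ψ) h1
    simpa [ContinuousLinearMap.mul_apply, ContinuousLinearMap.sub_apply,
      ContinuousLinearMap.smul_apply, ContinuousLinearMap.one_apply, eq_comm] using h2
  set φ := G ψ with hφ
  -- RHS equals re ⟪ψ, G ψ⟫
  have hR : (⟪ψ, ((2 : ℂ)⁻¹ • (G + adjoint G)) ψ⟫_ℂ).re = (⟪ψ, φ⟫_ℂ).re := by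
    rw [ContinuousLinearMap.smul_apply, ContinuousLinearMap.add_apply, inner_smul_right,
      inner_add_right]
    have h1 : ⟪ψ, adjoint G ψ⟫_ℂ = starRingEnd ℂ ⟪ψ, G ψ⟫_ℂ := by
      rw [adjoint_inner_right, ← inner_conj_symm]
    rw [h1]
    rw [Complex.add_conj]
    simp [Complex.mul_re, Complex.ofReal_re]
    rfl
  rw [hR]
  -- lower bound for RHS
  have hRe : ‖φ‖ ^ 2 - ‖adjoint V φ‖ * ‖φ‖ ≤ (⟪ψ, φ⟫_ℂ).re := by
    have h1 : ⟪ψ, φ⟫_ℂ = ⟪φ, φ⟫_ℂ - starRingEnd ℂ z * ⟪adjoint V φ, φ⟫_ℂ := by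
      conv_lhs => rw [hψeq]
      rw [inner_sub_left, inner_smul_left]
    have h2 : (starRingEnd ℂ z * ⟪adjoint V φ, φ⟫_ℂ).re ≤ ‖adjoint V φ‖ * ‖φ‖ := by
      calc (starRingEnd ℂ z * ⟪adjoint V φ, φ⟫_ℂ).re
          ≤ ‖starRingEnd ℂ z * ⟪adjoint V φ, φ⟫_ℂ‖ := Complex.re_le_norm _
        _ = ‖z‖ * ‖⟪adjoint V φ, φ⟫_ℂ‖ := by rw [norm_mul, RCLike.norm_conj]
        _ ≤ 1 * (‖adjoint V φ‖ * ‖φ‖) := by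
            apply mul_le_mul hz.le (norm_inner_le_norm _ _) (norm_nonneg _) zero_le_one
        _ = ‖adjoint V φ‖ * ‖φ‖ := one_mul _
    have h3 : (⟪φ, φ⟫_ℂ).re = ‖φ‖ ^ 2 := by
      simpa using inner_self_eq_norm_sq (𝕜 := ℂ) φ
    rw [h1, Complex.sub_re, h3]
    linarith
  -- decomposition of the LHS vector
  have hdec : (adjoint U - adjoint V) φ
      = adjoint U (φ - P φ) + (adjoint U (P φ) - Q (adjoint U (P φ))) := by
    rw [ContinuousLinearMap.sub_apply, hVadj φ, map_sub]
    abel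
  -- numeric bounds
  have f1 : ‖φ - P φ‖ ^ 2 + ‖P φ‖ ^ 2 ≤ ‖φ‖ ^ 2 := aux_norm P hPsa hP0 hP1 φ
  have f2 : ‖adjoint U (P φ) - Q (adjoint U (P φ))‖ ^ 2 + ‖adjoint V φ‖ ^ 2 ≤ ‖P φ‖ ^ 2 := by
    have h := aux_norm Q hQsa hQ0 hQ1 (adjoint U (P φ))
    rw [hUadj (P φ)] at h
    rw [hVadj φ]
    exact h
  have f3 : ‖(adjoint U - adjoint V) φ‖
      ≤ ‖φ - P φ‖ + ‖adjoint U (P φ) - Q (adjoint U (P φ))‖ := by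
    rw [hdec]
    calc ‖adjoint U (φ - P φ) + (adjoint U (P φ) - Q (adjoint U (P φ)))‖
        ≤ ‖adjoint U (φ - P φ)‖ + ‖adjoint U (P φ) - Q (adjoint U (P φ))‖ := norm_add_le _ _
      _ = ‖φ - P φ‖ + ‖adjoint U (P φ) - Q (adjoint U (P φ))‖ := by rw [hUadj]
  -- conclude
  nlinarith [f1, f2, f3, hRe, norm_nonneg ((adjoint U - adjoint V) φ),
    norm_nonneg (φ - P φ), norm_nonneg (adjoint U (P φ) - Q (adjoint U (P φ))),
    norm_nonneg φ, norm_nonneg (adjoint V φ), norm_nonneg (P φ),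
    sq_nonneg (‖φ - P φ‖ - ‖adjoint U (P φ) - Q (adjoint U (P φ))‖),
    sq_nonneg (‖φ‖ - ‖adjoint V φ‖)]
end
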